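/- Let d ≥ 2 and N ≥ 2, and set p_1 = ∑_{k=2}^N d^{N−k}. Then { g + s·p_1 : g ∈ {0,…,d^{N−1}−1}, s ∈ {0,…,d−1} } = {0, 1, …, 2d^{N−1} − 2}; in particular this set has exactly 2d^{N−1} − 1 elements. -/
import Mathlib

lemma geom_aux (d : ℕ) (hd : 2 ≤ d) :
    ∀ m, (d - 1) * ∑ i ∈ Finset.range m, d ^ i + 1 = d ^ m := by
  obtain ⟨e, rfl⟩ : ∃ e, d = e + 2 := ⟨d - 2, by omega⟩
  have hd1 : e + 2 - 1 = e + 1 := by omega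
  intro m
  induction m with
  | zero => simp
  | succ n ih =>
    rw [Finset.sum_range_succ, pow_succ, hd1] at *
    calc (e + 1) * (∑ i ∈ Finset.range n, (e + 2) ^ i + (e + 2) ^ n) + 1
        = ((e + 1) * ∑ i ∈ Finset.range n, (e + 2) ^ i + 1) + (e + 1) * (e + 2) ^ n := by ring
      _ = (e + 2) ^ n + (e + 1) * (e + 2) ^ n := by rw [ih]
      _ = (e + 2) ^ n * (e + 2) := by ring

/-- With `p₁ = ∑_{k=2}^N d^{N-k}`, the set
`{g + s·p₁ : 0 ≤ g ≤ d^{N-1}-1, 0 ≤ s ≤ d-1}` equals `{0, 1, …, 2d^{N-1}-2}`;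
in particular it has exactly `2d^{N-1} - 1` elements. -/
theorem stmt11 (d N : ℕ) (hd : 2 ≤ d) (hN : 2 ≤ N) :
    {n : ℕ | ∃ g < d ^ (N - 1), ∃ s < d,
        n = g + s * ∑ k ∈ Finset.Icc 2 N, d ^ (N - k)}
      = Set.Iio (2 * d ^ (N - 1) - 1) ∧
    Set.ncard {n : ℕ | ∃ g < d ^ (N - 1), ∃ s < d,
        n = g + s * ∑ k ∈ Finset.Icc 2 N, d ^ (N - k)}
      = 2 * d ^ (N - 1) - 1 := by
  set p := ∑ k ∈ Finset.Icc 2 N, d ^ (N - k) with hp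
  have hsum : p = ∑ i ∈ Finset.range (N - 1), d ^ i := by
    rw [hp]
    apply Finset.sum_nbij' (fun k => N - k) (fun j => N - j)
    · intro a ha
      simp only [Finset.mem_Icc] at ha
      simp only [Finset.mem_range]; omega
    · intro a ha
      simp only [Finset.mem_range] at ha
      simp only [Finset.mem_Icc]; omega
    · intro a ha
      simp only [Finset.mem_Icc] at ha; omega
    · intro a ha
      simp only [Finset.mem_range] at ha; omega
    · intro a ha; rfl
  have hgeom : (d - 1) * p + 1 = d ^ (N - 1) := by
    rw [hsum]; exact geom_aux d hd (N - 1)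
  have hdpow : d ≤ d ^ (N - 1) := by
    calc d = d ^ 1 := (pow_one d).symm
    _ ≤ d ^ (N - 1) := Nat.pow_le_pow_right (by omega) (by omega)
  have hp1 : 1 ≤ p := by
    by_contra h
    have : p = 0 := by omega
    rw [this] at hgeom
    omega
  have hple : p ≤ d ^ (N - 1) - 1 := by
    have : p ≤ (d - 1) * p := Nat.le_mul_of_pos_left p (by omega)
    omega
  have hmain : {n : ℕ | ∃ g < d ^ (N - 1), ∃ s < d, n = g + s * p}
      = Set.Iio (2 * d ^ (N - 1) - 1) := by
    ext n
    simp only [Set.mem_setOf_eq, Set.mem_Iio]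
    constructor
    · rintro ⟨g, hg, s, hs, rfl⟩
      have h1 : s * p ≤ (d - 1) * p := Nat.mul_le_mul_right p (by omega)
      omega
    · intro hn
      by_cases h : n < d ^ (N - 1)
      · exact ⟨n, h, 0, by omega, by simp⟩
      · by_cases h2 : n / p ≤ d - 1
        · have hm := Nat.mod_lt n hp1
          refine ⟨n % p, by omega, n / p, by omega, ?_⟩
          rw [Nat.mod_add_div']
        · have h3 : (d - 1) * p ≤ n := by
            calc (d - 1) * p ≤ (n / p) * p := Nat.mul_le_mul_right p (by omega)
            _ ≤ n := Nat.div_mul_le_self n p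
          refine ⟨n - (d - 1) * p, by omega, d - 1, by omega, by omega⟩
  refine ⟨hmain, ?_⟩
  rw [hmain, ← Finset.coe_range, Set.ncard_coe_finset, Finset.card_range]
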